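/- Let Π be a finite group and φ : Π → Π a group automorphism. Call a function f : Π → ℂ a φ-class function if f(φ(γ)·x·γ⁻¹) = f(x) for all γ, x ∈ Π. Let (ρ_i : Π → GL(V_i))_{i ∈ I} be a family of pairwise non-isomorphic irreducible finite-dimensional complex representations of Π such that every irreducible finite-dimensional complex representation ρ of Π with ρ ∘ φ isomorphic to ρ is isomorphic to some ρ_i, and suppose for each i ∈ I we are given a linear automorphism φ_i of V_i satisfying ρ_i(φ(γ)) = φ_i⁻¹ ∘ ρ_i(γ) ∘ φ_i for all γ ∈ Π. Then each twisted character χ̃_i : Π → ℂ, χ̃_i(γ) := tr(φ_i ∘ ρ_i(γ)), is a φ-class function, and the family (χ̃_i)_{i ∈ I} is a basis of the ℂ-vector space of φ-class functions on Π. -/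

import Mathlib

/-- A representation is irreducible if the space is nonzero and the only invariant
subspaces are `⊥` and `⊤`. -/
def IsIrreducibleRep {G V : Type*} [Group G] [AddCommGroup V] [Module ℂ V]
    (ρ : G →* (V →ₗ[ℂ] V)) : Prop :=
  (∃ v : V, v ≠ 0) ∧
    ∀ W : Submodule ℂ V, (∀ g : G, ∀ v ∈ W, ρ g v ∈ W) → W = ⊥ ∨ W = ⊤

/-- Two representations are isomorphic if there is an intertwining linear equivalence. -/
def RepEquiv {G V W : Type*} [Group G] [AddCommGroup V] [Module ℂ V]
    [AddCommGroup W] [Module ℂ W]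
    (ρ : G →* (V →ₗ[ℂ] V)) (τ : G →* (W →ₗ[ℂ] W)) : Prop :=
  ∃ e : V ≃ₗ[ℂ] W, ∀ (g : G) (v : V), e (ρ g v) = τ g (e v)

/-- The space of `φ`-class functions on a group `P`: functions invariant under
`φ`-conjugation `x ↦ φ(γ)·x·γ⁻¹`. -/
noncomputable def phiClassFun {P : Type*} [Group P] (φ : P ≃* P) : Submodule ℂ (P → ℂ) where
  carrier := {f : P → ℂ | ∀ γ x : P, f (φ γ * x * γ⁻¹) = f x}
  add_mem' := by
    intro a b ha hb
    simp only [Set.mem_setOf_eq] at *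
    intro γ x
    simp [Pi.add_apply, ha γ x, hb γ x]
  zero_mem' := by
    intro γ x
    simp
  smul_mem' := by
    intro c a ha
    simp only [Set.mem_setOf_eq] at *
    intro γ x
    simp [Pi.smul_apply, ha γ x]

section Schur

variable {G : Type*} [Group G] {V W : Type*} [AddCommGroup V] [Module ℂ V]
  [AddCommGroup W] [Module ℂ W]

theorem schur_one (ρ : G →* (V →ₗ[ℂ] V)) (σ : G →* (W →ₗ[ℂ] W))
    (hρ : IsIrreducibleRep ρ) (hσ : IsIrreducibleRep σ)
    (T : V →ₗ[ℂ] W) (hT : ∀ g, σ g ∘ₗ T = T ∘ₗ ρ g) :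
    T = 0 ∨ RepEquiv ρ σ := by
  have hcomm : ∀ g v, σ g (T v) = T (ρ g v) := fun g v => LinearMap.congr_fun (hT g) v
  have hker : ∀ g : G, ∀ v ∈ LinearMap.ker T, ρ g v ∈ LinearMap.ker T := by
    intro g v hv
    simp only [LinearMap.mem_ker] at *
    rw [← hcomm, hv, map_zero]
  have hrange : ∀ g : G, ∀ v ∈ LinearMap.range T, σ g v ∈ LinearMap.range T := by
    rintro g _ ⟨v, rfl⟩
    exact ⟨ρ g v, (hcomm g v).symm⟩
  rcases hρ.2 _ hker with h | h
  · rcases hσ.2 _ hrange with h2 | h2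
    · exact Or.inl (LinearMap.range_eq_bot.mp h2)
    · right
      have hbij : Function.Bijective T :=
        ⟨LinearMap.ker_eq_bot.mp h, LinearMap.range_eq_top.mp h2⟩
      exact ⟨LinearEquiv.ofBijective T hbij, fun g v => (hcomm g v).symm⟩
  · exact Or.inl (LinearMap.ker_eq_top.mp h)

theorem schur_two [FiniteDimensional ℂ V] (ρ : G →* (V →ₗ[ℂ] V))
    (hρ : IsIrreducibleRep ρ) (T : V →ₗ[ℂ] V) (hT : ∀ g, T ∘ₗ ρ g = ρ g ∘ₗ T) :
    ∃ c : ℂ, T = c • (LinearMap.id : V →ₗ[ℂ] V) := by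
  have hcomm : ∀ g v, T (ρ g v) = ρ g (T v) := fun g v => LinearMap.congr_fun (hT g) v
  obtain ⟨v0, hv0⟩ := hρ.1
  haveI : Nontrivial V := ⟨⟨v0, 0, hv0⟩⟩
  obtain ⟨c, hc⟩ := Module.End.exists_eigenvalue (T : Module.End ℂ V)
  refine ⟨c, ?_⟩
  have hinv : ∀ g : G, ∀ v ∈ Module.End.eigenspace (T : Module.End ℂ V) c,
      ρ g v ∈ Module.End.eigenspace (T : Module.End ℂ V) c := by
    intro g v hv
    rw [Module.End.mem_eigenspace_iff] at *
    rw [show ((T : Module.End ℂ V)) (ρ g v) = T (ρ g v) from rfl, hcomm, hv, map_smul]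
  rcases hρ.2 _ hinv with h | h
  · exact absurd h hc
  · ext v
    have hv : v ∈ Module.End.eigenspace (T : Module.End ℂ V) c := h ▸ Submodule.mem_top
    rw [Module.End.mem_eigenspace_iff] at hv
    simpa using hv
end Schur

open LinearMap TensorProduct

theorem trace_conj_mul {V W : Type*} [AddCommGroup V] [Module ℂ V] [AddCommGroup W]
    [Module ℂ W] [FiniteDimensional ℂ V] [FiniteDimensional ℂ W]
    (B : W →ₗ[ℂ] W) (C : V →ₗ[ℂ] V)
    (Ψ : (V →ₗ[ℂ] W) →ₗ[ℂ] (V →ₗ[ℂ] W)) (hΨ : ∀ A, Ψ A = B ∘ₗ A ∘ₗ C) :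
    trace ℂ (V →ₗ[ℂ] W) Ψ = trace ℂ W B * trace ℂ V C := by
  let e := dualTensorHomEquiv ℂ V W
  have key : ∀ z : Module.Dual ℂ V ⊗[ℂ] W,
      Ψ (e z) = e (TensorProduct.map (Module.Dual.transpose (R := ℂ) C) B z) := by
    intro z
    have : Ψ.comp e.toLinearMap =
        e.toLinearMap.comp (TensorProduct.map (Module.Dual.transpose (R := ℂ) C) B) := by
      apply TensorProduct.ext'
      intro f w
      ext v
      simp [hΨ, e, Module.Dual.transpose_apply]
    exact LinearMap.congr_fun this z
  have hconj : Ψ = e.conj (TensorProduct.map (Module.Dual.transpose (R := ℂ) C) B) := by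
    ext A
    rw [LinearEquiv.conj_apply]
    simp only [coe_comp, Function.comp_apply, LinearEquiv.coe_coe]
    rw [← key, e.apply_symm_apply]
  rw [hconj, trace_conj', trace_tensorProduct', trace_transpose', mul_comm]

open LinearMap

section Avg
variable {P : Type} [Group P] [Fintype P] (φ : P ≃* P)
variable {V W : Type*} [AddCommGroup V] [Module ℂ V] [AddCommGroup W] [Module ℂ W]

theorem avgG_intertwines (σ : P →* (V →ₗ[ℂ] V)) (τ : P →* (W →ₗ[ℂ] W))
    (Φσ : V ≃ₗ[ℂ] V) (Φτ : W ≃ₗ[ℂ] W)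
    (hσ : ∀ (γ : P) (v : V), σ γ (Φσ v) = Φσ (σ (φ γ) v))
    (hτ : ∀ (γ : P) (w : W), τ γ (Φτ w) = Φτ (τ (φ γ) w))
    (A : W →ₗ[ℂ] V) (T : W →ₗ[ℂ] V)
    (hT : ∀ w, T w = ∑ x : P, Φσ (σ x (A (τ x⁻¹ (Φτ.symm w))))) (γ : P) :
    σ γ ∘ₗ T = T ∘ₗ τ γ := by
  have hτ' : ∀ (γ : P) (w : W), Φτ.symm (τ γ w) = τ (φ γ) (Φτ.symm w) := by
    intro γ w
    apply Φτ.injective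
    rw [Φτ.apply_symm_apply]
    conv_rhs => rw [← hτ]
    rw [Φτ.apply_symm_apply]
  ext w
  simp only [coe_comp, Function.comp_apply, hT, map_sum]
  refine Fintype.sum_equiv (Equiv.mulLeft (φ γ)) _ _ ?_
  intro x
  simp only [Equiv.coe_mulLeft]
  rw [hσ, hτ', mul_inv_rev, map_mul σ, map_mul τ, Module.End.mul_apply, Module.End.mul_apply,
    ← Module.End.mul_apply (τ (φ γ)⁻¹), ← map_mul, inv_mul_cancel, map_one, Module.End.one_apply]

end Avg

section Orth
variable {P : Type} [Group P] [Fintype P] (φ : P ≃* P)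
variable {V W : Type*} [AddCommGroup V] [Module ℂ V] [AddCommGroup W] [Module ℂ W]
  [FiniteDimensional ℂ V] [FiniteDimensional ℂ W]

noncomputable def PsiOp (σ : P →* (V →ₗ[ℂ] V)) (τ : P →* (W →ₗ[ℂ] W))
    (Φσ : V ≃ₗ[ℂ] V) (Φτ : W ≃ₗ[ℂ] W) : (W →ₗ[ℂ] V) →ₗ[ℂ] (W →ₗ[ℂ] V) :=
  ∑ x : P, (LinearMap.llcomp ℂ W V V (Φσ.toLinearMap ∘ₗ σ x)) ∘ₗ
    (LinearMap.lcomp ℂ V (τ x⁻¹ ∘ₗ Φτ.symm.toLinearMap))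

theorem PsiOp_apply (σ : P →* (V →ₗ[ℂ] V)) (τ : P →* (W →ₗ[ℂ] W))
    (Φσ : V ≃ₗ[ℂ] V) (Φτ : W ≃ₗ[ℂ] W) (A : W →ₗ[ℂ] V) :
    PsiOp σ τ Φσ Φτ A =
      ∑ x : P, (Φσ.toLinearMap ∘ₗ σ x) ∘ₗ (A ∘ₗ (τ x⁻¹ ∘ₗ Φτ.symm.toLinearMap)) := by
  simp only [PsiOp, LinearMap.sum_apply, coe_comp, Function.comp_apply]
  exact Finset.sum_congr rfl fun x _ => rfl

theorem PsiOp_trace (σ : P →* (V →ₗ[ℂ] V)) (τ : P →* (W →ₗ[ℂ] W))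
    (Φσ : V ≃ₗ[ℂ] V) (Φτ : W ≃ₗ[ℂ] W) :
    trace ℂ _ (PsiOp σ τ Φσ Φτ) =
      ∑ x : P, (trace ℂ V (Φσ.toLinearMap ∘ₗ σ x)) *
        (trace ℂ W (τ x⁻¹ ∘ₗ Φτ.symm.toLinearMap)) := by
  rw [PsiOp, map_sum]
  refine Finset.sum_congr rfl fun x _ => ?_
  exact trace_conj_mul _ _ _ (fun A => rfl)

theorem PsiOp_intertwines (σ : P →* (V →ₗ[ℂ] V)) (τ : P →* (W →ₗ[ℂ] W))
    (Φσ : V ≃ₗ[ℂ] V) (Φτ : W ≃ₗ[ℂ] W)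
    (hσ : ∀ (γ : P) (v : V), σ γ (Φσ v) = Φσ (σ (φ γ) v))
    (hτ : ∀ (γ : P) (w : W), τ γ (Φτ w) = Φτ (τ (φ γ) w))
    (A : W →ₗ[ℂ] V) (γ : P) :
    σ γ ∘ₗ (PsiOp σ τ Φσ Φτ A) = (PsiOp σ τ Φσ Φτ A) ∘ₗ τ γ := by
  refine avgG_intertwines φ σ τ Φσ Φτ hσ hτ A _ (fun w => ?_) γ
  rw [PsiOp_apply]
  simp

theorem orth_ne (σ : P →* (V →ₗ[ℂ] V)) (τ : P →* (W →ₗ[ℂ] W))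
    (Φσ : V ≃ₗ[ℂ] V) (Φτ : W ≃ₗ[ℂ] W)
    (hσ : ∀ (γ : P) (v : V), σ γ (Φσ v) = Φσ (σ (φ γ) v))
    (hτ : ∀ (γ : P) (w : W), τ γ (Φτ w) = Φτ (τ (φ γ) w))
    (hσirr : IsIrreducibleRep σ) (hτirr : IsIrreducibleRep τ)
    (hne : ¬ RepEquiv τ σ) :
    ∑ x : P, (trace ℂ V (Φσ.toLinearMap ∘ₗ σ x)) *
        (trace ℂ W (τ x⁻¹ ∘ₗ Φτ.symm.toLinearMap)) = 0 := by
  rw [← PsiOp_trace]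
  have hzero : PsiOp σ τ Φσ Φτ = 0 := by
    apply LinearMap.ext
    intro A
    rcases schur_one τ σ hτirr hσirr (PsiOp σ τ Φσ Φτ A)
        (fun g => PsiOp_intertwines φ σ τ Φσ Φτ hσ hτ A g) with h | h
    · simpa using h
    · exact absurd h hne
  rw [hzero, map_zero]

theorem trace_end_complex (m : ℂ →ₗ[ℂ] ℂ) : trace ℂ ℂ m = m 1 := by
  have : m = (m 1) • LinearMap.id := by
    refine LinearMap.ext fun x => ?_
    simp only [LinearMap.smul_apply, LinearMap.id_apply, smul_eq_mul]
    rw [show (x : ℂ) = x • (1 : ℂ) by simp, map_smul]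
    simp [mul_comm]
  rw [this, map_smul, trace_id, Module.finrank_self]
  simp

theorem orth_self (σ : P →* (V →ₗ[ℂ] V)) (Φσ : V ≃ₗ[ℂ] V)
    (hσ : ∀ (γ : P) (v : V), σ γ (Φσ v) = Φσ (σ (φ γ) v))
    (hσirr : IsIrreducibleRep σ) :
    ∑ x : P, (trace ℂ V (Φσ.toLinearMap ∘ₗ σ x)) *
        (trace ℂ V (σ x⁻¹ ∘ₗ Φσ.symm.toLinearMap)) = (Fintype.card P : ℂ) := by
  obtain ⟨v0, hv0⟩ := hσirr.1
  haveI : Nontrivial V := ⟨⟨v0, 0, hv0⟩⟩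
  set d := Module.finrank ℂ V with hdd
  have hd : (d : ℂ) ≠ 0 := by
    exact Nat.cast_ne_zero.mpr (Module.finrank_pos (R := ℂ) (M := V)).ne'
  set Ψ := PsiOp σ σ Φσ Φσ with hΨdef
  have hscalar : ∀ A, Ψ A = ((d : ℂ)⁻¹ * trace ℂ V (Ψ A)) • (LinearMap.id : V →ₗ[ℂ] V) := by
    intro A
    obtain ⟨c, hc⟩ := schur_two σ hσirr (Ψ A)
      (fun g => (PsiOp_intertwines φ σ σ Φσ Φσ hσ hσ A g).symm)
    rw [hc, map_smul, trace_id]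
    congr 1
    simp only [smul_eq_mul]
    field_simp
    rfl
  set cfun : ((V →ₗ[ℂ] V) →ₗ[ℂ] ℂ) := (d : ℂ)⁻¹ • ((trace ℂ V) ∘ₗ Ψ) with hcfun
  have hfact : Ψ = (LinearMap.toSpanSingleton ℂ (V →ₗ[ℂ] V) LinearMap.id) ∘ₗ cfun := by
    apply LinearMap.ext
    intro A
    rw [hscalar A]
    simp [cfun, LinearMap.toSpanSingleton_apply, mul_comm]
  have hΨid : Ψ LinearMap.id = (Fintype.card P : ℂ) • (LinearMap.id : V →ₗ[ℂ] V) := by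
    rw [hΨdef, PsiOp_apply]
    have : ∀ x : P, (Φσ.toLinearMap ∘ₗ σ x) ∘ₗ
        ((LinearMap.id : V →ₗ[ℂ] V) ∘ₗ (σ x⁻¹ ∘ₗ Φσ.symm.toLinearMap)) =
        (LinearMap.id : V →ₗ[ℂ] V) := by
      intro x
      ext v
      simp only [coe_comp, Function.comp_apply, LinearEquiv.coe_coe, LinearMap.id_coe, id_eq]
      rw [← Module.End.mul_apply (σ x), ← map_mul, mul_inv_cancel, map_one,
        Module.End.one_apply, Φσ.apply_symm_apply]
    rw [Finset.sum_congr rfl (fun x _ => this x), Finset.sum_const, Finset.card_univ,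
      ← Nat.cast_smul_eq_nsmul ℂ]
  have htr : trace ℂ _ Ψ = (Fintype.card P : ℂ) := by
    rw [hfact, trace_comp_comm', trace_end_complex]
    simp only [coe_comp, Function.comp_apply, LinearMap.toSpanSingleton_apply, one_smul]
    rw [hcfun]
    simp only [LinearMap.smul_apply, coe_comp, Function.comp_apply, smul_eq_mul]
    rw [hΨid]
    rw [map_smul, trace_id]
    simp only [smul_eq_mul]
    field_simp
    rfl
  rw [← PsiOp_trace, ← hΨdef, htr]

end Orth
section Vanish
open LinearMap
variable {P : Type} [Group P] [Fintype P] (φ : P ≃* P)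
variable {V W : Type*} [AddCommGroup V] [Module ℂ V] [AddCommGroup W] [Module ℂ W]

theorem Nop_intertwines (τ : P →* (W →ₗ[ℂ] W)) (f : P → ℂ)
    (hf : ∀ γ x, f (φ γ * x * γ⁻¹) = f x) (γ : P) :
    τ γ ∘ₗ (∑ x : P, f x⁻¹ • τ x) = (∑ x : P, f x⁻¹ • τ x) ∘ₗ τ (φ γ) := by
  ext w
  simp only [coe_comp, Function.comp_apply, LinearMap.sum_apply, LinearMap.smul_apply,
    map_sum, map_smul]
  refine Fintype.sum_equiv ((Equiv.mulLeft γ).trans (Equiv.mulRight (φ γ)⁻¹)) _ _ fun x => ?_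
  simp only [Equiv.trans_apply, Equiv.coe_mulLeft, Equiv.coe_mulRight]
  have h1 : (γ * x * (φ γ)⁻¹)⁻¹ = φ γ * x⁻¹ * γ⁻¹ := by group
  rw [h1, hf γ x⁻¹]
  congr 1
  rw [← Module.End.mul_apply (τ (γ * x * (φ γ)⁻¹)), ← map_mul, inv_mul_cancel_right,
    ← Module.End.mul_apply (τ γ), ← map_mul]

theorem Kvanish [FiniteDimensional ℂ V] (σ : P →* (V →ₗ[ℂ] V)) (Φσ : V ≃ₗ[ℂ] V)
    (hσ : ∀ (γ : P) (v : V), σ γ (Φσ v) = Φσ (σ (φ γ) v)) (hirr : IsIrreducibleRep σ)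
    (f : P → ℂ) (hf : ∀ γ x, f (φ γ * x * γ⁻¹) = f x)
    (hK : ∑ x : P, f x * trace ℂ V (σ x⁻¹ ∘ₗ Φσ.symm.toLinearMap) = 0) :
    (∑ x : P, f x⁻¹ • σ x : V →ₗ[ℂ] V) = 0 := by
  obtain ⟨v0, hv0⟩ := hirr.1
  haveI : Nontrivial V := ⟨⟨v0, 0, hv0⟩⟩
  have hd : ((Module.finrank ℂ V : ℂ)) ≠ 0 :=
    Nat.cast_ne_zero.mpr (Module.finrank_pos (R := ℂ) (M := V)).ne'
  set N : V →ₗ[ℂ] V := ∑ x : P, f x⁻¹ • σ x with hN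
  have hσ' : ∀ (γ : P) (v : V), Φσ.symm (σ γ v) = σ (φ γ) (Φσ.symm v) := by
    intro γ v
    apply Φσ.injective
    rw [Φσ.apply_symm_apply]
    conv_rhs => rw [← hσ]
    rw [Φσ.apply_symm_apply]
  set T : V →ₗ[ℂ] V := N ∘ₗ Φσ.symm.toLinearMap with hT
  have hTcomm : ∀ g, T ∘ₗ σ g = σ g ∘ₗ T := by
    intro g
    have h2 := Nop_intertwines φ σ f hf g
    rw [← hN] at h2
    ext v
    simp only [hT, coe_comp, Function.comp_apply, LinearEquiv.coe_coe]
    rw [hσ']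
    exact (LinearMap.congr_fun h2 (Φσ.symm v)).symm
  obtain ⟨c, hc⟩ := schur_two σ hirr T hTcomm
  have htrT : trace ℂ V T = 0 := by
    have hTsum : T = ∑ x : P, f x⁻¹ • (σ x ∘ₗ Φσ.symm.toLinearMap) := by
      ext v
      simp [hT, hN, LinearMap.sum_apply]
    rw [hTsum, map_sum]
    simp only [map_smul, smul_eq_mul]
    rw [← hK]
    refine Fintype.sum_equiv (Equiv.inv P) _ _ fun x => ?_
    simp [inv_inv]
  have hc0 : c = 0 := by
    rw [hc, map_smul, trace_id, smul_eq_mul] at htrT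
    exact (mul_eq_zero.mp htrT).resolve_right hd
  have hT0 : T = 0 := by rw [hc, hc0, zero_smul]
  have : N = T ∘ₗ Φσ.toLinearMap := by
    ext v
    simp [hT]
  rw [this, hT0, zero_comp]

end Vanish
section Reg
open LinearMap
variable {P : Type} [Group P] [Fintype P]

/-- The representation of `P` on a left submodule of its group algebra. -/
noncomputable def subRep (W : Submodule (MonoidAlgebra ℂ P) (MonoidAlgebra ℂ P)) :
    P →* (W →ₗ[ℂ] W) where
  toFun g :=
    { toFun := fun w => (MonoidAlgebra.single g (1 : ℂ) : MonoidAlgebra ℂ P) • w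
      map_add' := fun a b => smul_add _ a b
      map_smul' := fun c w => by
        ext
        push_cast [Submodule.coe_smul]
        rw [smul_eq_mul, smul_eq_mul, mul_smul_comm]
        rfl }
  map_one' := by
    ext w
    simp only [LinearMap.coe_mk, AddHom.coe_mk, LinearMap.id_coe, id_eq]
    rw [← MonoidAlgebra.one_def, one_smul]
    rfl
  map_mul' g h := by
    refine LinearMap.ext fun w => ?_
    simp only [LinearMap.coe_mk, AddHom.coe_mk, Module.End.mul_apply]
    rw [← mul_smul]
    congr 1
    rw [MonoidAlgebra.single_mul_single, one_mul]

theorem subRep_apply (W : Submodule (MonoidAlgebra ℂ P) (MonoidAlgebra ℂ P)) (g : P) (w : W) :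
    ((subRep W g w : W) : MonoidAlgebra ℂ P) =
      MonoidAlgebra.single g (1 : ℂ) * (w : MonoidAlgebra ℂ P) := rfl

theorem subRep_irreducible (W : Submodule (MonoidAlgebra ℂ P) (MonoidAlgebra ℂ P))
    (hW : IsSimpleModule (MonoidAlgebra ℂ P) W) : IsIrreducibleRep (subRep W) := by
  constructor
  · haveI := hW
    haveI : Nontrivial W := IsSimpleModule.nontrivial (MonoidAlgebra ℂ P) W
    obtain ⟨w, hw⟩ := exists_ne (0 : W)
    exact ⟨w, hw⟩
  · intro U hU
    set U' : Submodule (MonoidAlgebra ℂ P) W :=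
      { carrier := U
        add_mem' := fun ha hb => U.add_mem ha hb
        zero_mem' := U.zero_mem
        smul_mem' := by
          intro a u hu
          have ha : a = ∑ g ∈ a.coeff.support, MonoidAlgebra.single g (a.coeff g) := by
            conv_lhs => rw [← MonoidAlgebra.sum_coeff_single a]
            rfl
          rw [ha, Finset.sum_smul]
          refine Submodule.sum_mem U fun g _ => ?_
          have : (MonoidAlgebra.single g (a.coeff g) : MonoidAlgebra ℂ P) • u
              = (a.coeff g) • (subRep W g u) := by
            rw [show (MonoidAlgebra.single g (a.coeff g) : MonoidAlgebra ℂ P)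
              = (a.coeff g) • MonoidAlgebra.single g (1:ℂ) by
                rw [MonoidAlgebra.smul_single, smul_eq_mul, mul_one], smul_assoc]
            rfl
          rw [this]
          exact U.smul_mem _ (hU g u hu) } with hU'
    haveI := hW
    rcases eq_bot_or_eq_top U' with h | h
    · left
      ext w
      constructor
      · intro hw
        have : w ∈ U' := hw
        rw [h] at this
        simpa using this
      · intro hw
        simp only [Submodule.mem_bot] at hw
        rw [hw]; exact U.zero_mem
    · right
      ext w
      simp only [Submodule.mem_top, iff_true]
      have : w ∈ (⊤ : Submodule (MonoidAlgebra ℂ P) W) := trivial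
      rw [← h] at this
      exact this

end Reg

section Main
open LinearMap

theorem comp_aut_irreducible {P W : Type*} [Group P] [AddCommGroup W] [Module ℂ W]
    (φ : P ≃* P) (τ : P →* (W →ₗ[ℂ] W)) (h : IsIrreducibleRep τ) :
    IsIrreducibleRep (τ.comp φ.toMonoidHom) := by
  refine ⟨h.1, fun U hU => h.2 U fun g v hv => ?_⟩
  have := hU (φ.symm g) v hv
  simpa using this

theorem vanish_of_K_zero
    {P : Type} [Group P] [Fintype P] (φ : P ≃* P)
    {I : Type} (V : I → Type)
    [∀ i, AddCommGroup (V i)] [∀ i, Module ℂ (V i)] [∀ i, FiniteDimensional ℂ (V i)]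
    (ρ : ∀ i, P →* (V i →ₗ[ℂ] V i))
    (hirr : ∀ i, IsIrreducibleRep (ρ i))
    (hexh : ∀ (W : Type) [AddCommGroup W] [Module ℂ W] [FiniteDimensional ℂ W]
      (τ : P →* (W →ₗ[ℂ] W)), IsIrreducibleRep τ →
      RepEquiv (τ.comp φ.toMonoidHom) τ → ∃ i, RepEquiv τ (ρ i))
    (Φ : ∀ i, V i ≃ₗ[ℂ] V i)
    (hpt : ∀ (i : I) (γ : P) (v : V i), ρ i γ ((Φ i) v) = Φ i (ρ i (φ γ) v))
    (f : P → ℂ) (hf : ∀ γ x, f (φ γ * x * γ⁻¹) = f x)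
    (hK : ∀ i, ∑ x : P, f x * LinearMap.trace ℂ (V i)
      (ρ i x⁻¹ ∘ₗ (Φ i).symm.toLinearMap) = 0) :
    f = 0 := by
  classical
  haveI : NeZero ((Fintype.card P : ℂ)) :=
    ⟨Nat.cast_ne_zero.mpr Fintype.card_ne_zero⟩
  haveI hfdA : FiniteDimensional ℂ (MonoidAlgebra ℂ P) :=
    LinearEquiv.finiteDimensional (MonoidAlgebra.coeffLinearEquiv ℂ).symm
  -- Step 1 : the averaged operator vanishes on every simple submodule
  have step1 : ∀ (W : Submodule (MonoidAlgebra ℂ P) (MonoidAlgebra ℂ P)),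
      IsSimpleModule (MonoidAlgebra ℂ P) W →
      (∑ x : P, f x⁻¹ • subRep W x : W →ₗ[ℂ] W) = 0 := by
    intro W hW
    haveI : FiniteDimensional ℂ W :=
      FiniteDimensional.of_injective ((W.subtype).restrictScalars ℂ) Subtype.val_injective
    have hτirr := subRep_irreducible W hW
    have hτφirr := comp_aut_irreducible φ (subRep W) hτirr
    rcases schur_one ((subRep W).comp φ.toMonoidHom) (subRep W) hτφirr hτirr
        (∑ x : P, f x⁻¹ • subRep W x)
        (fun g => Nop_intertwines φ (subRep W) f hf g) with h | h
    · exact h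
    · obtain ⟨i, e, he⟩ := hexh W (subRep W) hτirr h
      have hNi : (∑ x : P, f x⁻¹ • ρ i x : V i →ₗ[ℂ] V i) = 0 :=
        Kvanish φ (ρ i) (Φ i) (hpt i) (hirr i) f hf (hK i)
      apply LinearMap.ext
      intro w
      rw [LinearMap.zero_apply]
      apply e.injective
      rw [map_zero]
      have : e ((∑ x : P, f x⁻¹ • subRep W x) w) = (∑ x : P, f x⁻¹ • ρ i x) (e w) := by
        simp only [LinearMap.sum_apply, LinearMap.smul_apply, map_sum, map_smul]
        exact Finset.sum_congr rfl fun x _ => by rw [he]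
      rw [this, hNi, LinearMap.zero_apply]
  -- Step 2 : hence the global averaged multiplication operator vanishes
  have step2 : ∀ a : MonoidAlgebra ℂ P,
      (∑ x : P, f x⁻¹ • (MonoidAlgebra.single x (1:ℂ) * a)) = 0 := by
    intro a
    have hmem : a ∈ sSup { m : Submodule (MonoidAlgebra ℂ P) (MonoidAlgebra ℂ P) |
        IsSimpleModule (MonoidAlgebra ℂ P) m } := by
      rw [IsSemisimpleModule.sSup_simples_eq_top]; trivial
    rw [sSup_eq_iSup'] at hmem
    refine Submodule.iSup_induction _ hmem (motive := fun b =>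
      (∑ x : P, f x⁻¹ • (MonoidAlgebra.single x (1:ℂ) * b)) = 0) ?_ ?_ ?_
    · rintro ⟨W, hW⟩ b hb
      have h0 := step1 W hW
      have := LinearMap.congr_fun h0 ⟨b, hb⟩
      rw [LinearMap.zero_apply] at this
      have hcoe : ((((∑ x : P, f x⁻¹ • subRep W x : W →ₗ[ℂ] W)) ⟨b, hb⟩ : W)
          : MonoidAlgebra ℂ P) = ∑ x : P, f x⁻¹ • (MonoidAlgebra.single x (1:ℂ) * b) := by
        rw [LinearMap.sum_apply]
        push_cast
        refine Finset.sum_congr rfl fun x _ => ?_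
        rw [LinearMap.smul_apply]
        push_cast [Submodule.coe_smul]
        rw [subRep_apply]
      rw [← hcoe, this]
      rfl
    · simp
    · intro b c hb hc
      have : ∀ x : P, MonoidAlgebra.single x (1:ℂ) * (b + c)
          = MonoidAlgebra.single x (1:ℂ) * b + MonoidAlgebra.single x (1:ℂ) * c :=
        fun x => mul_add _ _ _
      simp only [this, smul_add, Finset.sum_add_distrib, hb, hc, add_zero]
  -- Step 3 : evaluate at `single 1 1` to recover `f`
  have step3 := step2 (MonoidAlgebra.single 1 (1:ℂ))
  have hsimp : (∑ x : P, f x⁻¹ • (MonoidAlgebra.single x (1:ℂ) *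
      MonoidAlgebra.single 1 (1:ℂ))) = ∑ x : P, MonoidAlgebra.single x (f x⁻¹) := by
    refine Finset.sum_congr rfl fun x _ => ?_
    rw [MonoidAlgebra.single_mul_single, mul_one, one_mul, MonoidAlgebra.smul_single, smul_eq_mul,
      mul_one]
  rw [hsimp] at step3
  have step3' : ((∑ x : P, Finsupp.single x (f x⁻¹)) : P →₀ ℂ) = 0 := by
    exact (MonoidAlgebra.coeff_sum _ _).symm.trans (congrArg MonoidAlgebra.coeff step3)
  funext z
  show f z = 0
  have := DFunLike.congr_fun step3' z⁻¹
  rw [Finsupp.finset_sum_apply] at this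
  simp only [Finsupp.single_apply, Finsupp.coe_zero, Pi.zero_apply] at this
  rwa [Finset.sum_ite_eq' Finset.univ z⁻¹ (fun x => f x⁻¹), if_pos (Finset.mem_univ _),
    inv_inv] at this
  

end Main

section Final
open LinearMap

theorem mem_phiClassFun_iff {P : Type*} [Group P] (φ : P ≃* P) (f : P → ℂ) :
    f ∈ phiClassFun φ ↔ ∀ γ x : P, f (φ γ * x * γ⁻¹) = f x := Iff.rfl

theorem Ksum_swap {P : Type} [Fintype P] (c : P → ℂ) {I : Type} (s : Finset I)
    (g : I → ℂ) (χ : I → P → ℂ) :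
    ∑ x : P, (∑ i ∈ s, g i • χ i) x * c x = ∑ i ∈ s, g i * ∑ x : P, χ i x * c x := by
  simp only [Finset.sum_apply, Pi.smul_apply, smul_eq_mul, Finset.sum_mul, Finset.mul_sum]
  rw [Finset.sum_comm]
  simp [mul_assoc]


/-- Twisted characters of the `φ`-fixed irreducible representations of a finite group
form a basis of the space of `φ`-class functions. -/
theorem twisted_characters_basis_of_phi_class_functions
    {P : Type} [Group P] [Finite P] (φ : P ≃* P)
    {I : Type} (V : I → Type)
    [∀ i, AddCommGroup (V i)] [∀ i, Module ℂ (V i)] [∀ i, FiniteDimensional ℂ (V i)]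
    (ρ : ∀ i, P →* (V i →ₗ[ℂ] V i))
    (hirr : ∀ i, IsIrreducibleRep (ρ i))
    (hdisj : ∀ i j : I, i ≠ j → ¬ RepEquiv (ρ i) (ρ j))
    (hexh : ∀ (W : Type) [AddCommGroup W] [Module ℂ W] [FiniteDimensional ℂ W]
      (τ : P →* (W →ₗ[ℂ] W)), IsIrreducibleRep τ →
      RepEquiv (τ.comp φ.toMonoidHom) τ → ∃ i, RepEquiv τ (ρ i))
    (Φ : ∀ i, V i ≃ₗ[ℂ] V i)
    (hint : ∀ (i : I) (γ : P),
      ρ i (φ γ) = (Φ i).symm.toLinearMap ∘ₗ ρ i γ ∘ₗ (Φ i).toLinearMap) :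
    (∀ i, (fun γ : P => LinearMap.trace ℂ (V i) ((Φ i).toLinearMap ∘ₗ ρ i γ)) ∈
        phiClassFun φ) ∧
    LinearIndependent ℂ
      (fun i : I => fun γ : P => LinearMap.trace ℂ (V i) ((Φ i).toLinearMap ∘ₗ ρ i γ)) ∧
    Submodule.span ℂ
      (Set.range (fun i : I => fun γ : P =>
        LinearMap.trace ℂ (V i) ((Φ i).toLinearMap ∘ₗ ρ i γ))) = phiClassFun φ := by
  classical
  cases nonempty_fintype P
  have hcard : ((Fintype.card P : ℂ)) ≠ 0 := Nat.cast_ne_zero.mpr Fintype.card_ne_zero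
  -- pointwise intertwining
  have hpt : ∀ (i : I) (γ : P) (v : V i), ρ i γ ((Φ i) v) = Φ i (ρ i (φ γ) v) := by
    intro i γ v
    rw [hint i γ]
    simp
  set χ : I → (P → ℂ) :=
    fun i => fun γ : P => LinearMap.trace ℂ (V i) ((Φ i).toLinearMap ∘ₗ ρ i γ) with hχ
  -- membership
  have part1 : ∀ i, χ i ∈ phiClassFun φ := by
    intro i
    rw [mem_phiClassFun_iff]
    intro γ x
    have h1 : (Φ i).toLinearMap ∘ₗ ρ i (φ γ * x * γ⁻¹) =
        ρ i γ ∘ₗ (((Φ i).toLinearMap ∘ₗ ρ i x) ∘ₗ ρ i γ⁻¹) := by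
      ext v
      simp only [coe_comp, Function.comp_apply, LinearEquiv.coe_coe]
      rw [hpt]
      congr 1
      rw [← Module.End.mul_apply (ρ i x), ← map_mul, ← Module.End.mul_apply (ρ i (φ γ)),
        ← map_mul, mul_assoc]
    have h2 : (((Φ i).toLinearMap ∘ₗ ρ i x) ∘ₗ ρ i γ⁻¹) ∘ₗ ρ i γ =
        (Φ i).toLinearMap ∘ₗ ρ i x := by
      ext v
      simp only [coe_comp, Function.comp_apply, LinearEquiv.coe_coe]
      rw [← Module.End.mul_apply (ρ i γ⁻¹), ← map_mul, inv_mul_cancel, map_one,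
        Module.End.one_apply]
    show LinearMap.trace ℂ (V i) ((Φ i).toLinearMap ∘ₗ ρ i (φ γ * x * γ⁻¹)) =
      LinearMap.trace ℂ (V i) ((Φ i).toLinearMap ∘ₗ ρ i x)
    rw [h1, trace_comp_comm', h2]
  -- the K pairing and orthogonality
  set K : I → (P → ℂ) → ℂ := fun j F =>
    ∑ x : P, F x * LinearMap.trace ℂ (V j) (ρ j x⁻¹ ∘ₗ (Φ j).symm.toLinearMap) with hKdef
  have horth : ∀ i j, K j (χ i) = if i = j then (Fintype.card P : ℂ) else 0 := by
    intro i j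
    by_cases hij : i = j
    · subst hij
      rw [if_pos rfl]
      simp only [hKdef]
      exact orth_self φ (ρ i) (Φ i) (hpt i) (hirr i)
    · rw [if_neg hij]
      simp only [hKdef]
      exact orth_ne φ (ρ i) (ρ j) (Φ i) (Φ j) (hpt i) (hpt j) (hirr i) (hirr j)
        (hdisj j i (Ne.symm hij))
  -- linear independence
  have part2 : LinearIndependent ℂ χ := by
    rw [linearIndependent_iff']
    intro s g hsum j hj
    have h1 : K j (∑ i ∈ s, g i • χ i) = g j * (Fintype.card P : ℂ) := by
      simp only [hKdef]
      rw [Ksum_swap]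
      have : ∀ i ∈ s, g i * (∑ x : P, χ i x *
          LinearMap.trace ℂ (V j) (ρ j x⁻¹ ∘ₗ (Φ j).symm.toLinearMap)) =
          if i = j then g i * (Fintype.card P : ℂ) else 0 := by
        intro i _
        have := horth i j
        simp only [hKdef] at this
        rw [this]
        split_ifs <;> simp
      rw [Finset.sum_congr rfl this, Finset.sum_ite_eq' s j, if_pos hj]
    rw [hsum] at h1
    have h0 : K j (0 : P → ℂ) = 0 := by simp [hKdef]
    rw [h0] at h1
    exact (mul_eq_zero.mp h1.symm).resolve_right hcard
  refine ⟨part1, part2, ?_⟩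
  -- spanning
  haveI : Finite I := by
    haveI : FiniteDimensional ℂ (P → ℂ) := inferInstance
    exact part2.finite
  haveI : Fintype I := Fintype.ofFinite I
  apply le_antisymm
  · rw [Submodule.span_le]
    rintro _ ⟨i, rfl⟩
    exact part1 i
  · intro f hfmem
    set g : P → ℂ := f - ∑ i : I, ((Fintype.card P : ℂ)⁻¹ * K i f) • χ i with hg
    have hgmem : g ∈ phiClassFun φ := by
      refine Submodule.sub_mem _ hfmem (Submodule.sum_mem _ fun i _ => ?_)
      exact Submodule.smul_mem _ _ (part1 i)
    have hgK : ∀ j, K j g = 0 := by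
      intro j
      simp only [hKdef]
      have hsplit : ∀ x : P, g x * LinearMap.trace ℂ (V j)
          (ρ j x⁻¹ ∘ₗ (Φ j).symm.toLinearMap) =
          f x * LinearMap.trace ℂ (V j) (ρ j x⁻¹ ∘ₗ (Φ j).symm.toLinearMap) -
          (∑ i : I, ((Fintype.card P : ℂ)⁻¹ * K i f) • χ i) x *
            LinearMap.trace ℂ (V j) (ρ j x⁻¹ ∘ₗ (Φ j).symm.toLinearMap) := by
        intro x
        rw [hg]
        simp [sub_mul]
      rw [Finset.sum_congr rfl fun x _ => hsplit x, Finset.sum_sub_distrib]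
      rw [Ksum_swap (s := Finset.univ)]
      have : ∀ i ∈ Finset.univ, ((Fintype.card P : ℂ)⁻¹ * K i f) *
          (∑ x : P, χ i x * LinearMap.trace ℂ (V j) (ρ j x⁻¹ ∘ₗ (Φ j).symm.toLinearMap)) =
          if i = j then ((Fintype.card P : ℂ)⁻¹ * K i f) * (Fintype.card P : ℂ) else 0 := by
        intro i _
        have := horth i j
        simp only [hKdef] at this
        rw [this]
        split_ifs <;> simp
      rw [Finset.sum_congr rfl this, Finset.sum_ite_eq' Finset.univ j, if_pos (Finset.mem_univ j)]
      have : ((Fintype.card P : ℂ)⁻¹ * K j f) * (Fintype.card P : ℂ) = K j f := by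
        field_simp
      rw [this]
      simp only [hKdef]
      simp
    have hg0 : g = 0 := by
      refine vanish_of_K_zero φ V ρ hirr hexh Φ hpt g ?_ ?_
      · exact (mem_phiClassFun_iff φ g).mp hgmem
      · intro i
        have := hgK i
        simp only [hKdef] at this
        exact this
    have hfeq : f = ∑ i : I, ((Fintype.card P : ℂ)⁻¹ * K i f) • χ i := by
      have := sub_eq_zero.mp (hg ▸ hg0 : f - ∑ i : I, ((Fintype.card P : ℂ)⁻¹ * K i f) • χ i = 0)
      exact this
    rw [hfeq]
    exact Submodule.sum_mem _ fun i _ =>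
      Submodule.smul_mem _ _ (Submodule.subset_span ⟨i, rfl⟩)

end Final
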